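/- (Williamson) For every real symmetric positive-definite 2N×2N matrix σ there exists a symplectic matrix B (i.e., Bᵀ·Ω·B = Ω) and positive real numbers ν₁,…,ν_N such that B·σ·Bᵀ = diag(ν₁,ν₁,…,ν_N,ν_N). -/

import Mathlib

open Matrix

/-- The standard symplectic form `⊕_N [[0,1],[-1,0]]` on a `2N`-dimensional space. -/
def stdOmega (N : ℕ) (R : Type) [Ring R] :
    Matrix (Fin N × Fin 2) (Fin N × Fin 2) R := fun i j =>
  if i.1 = j.1 then
    (if i.2 = 0 ∧ j.2 = 1 then 1 else if i.2 = 1 ∧ j.2 = 0 then -1 else 0)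
  else 0

open Module

local notation "⟪" x ", " y "⟫" => @inner ℝ _ _ x y

theorem skew_normal_form (N : ℕ) : ∀ (E : Type) [NormedAddCommGroup E]
    [InnerProductSpace ℝ E] [FiniteDimensional ℝ E],
    finrank ℝ E = 2 * N → ∀ (f : E →ₗ[ℝ] E),
    (∀ x y : E, ⟪f x, y⟫ = -⟪x, f y⟫) → Function.Injective f →
    ∃ (b : OrthonormalBasis (Fin N × Fin 2) ℝ E) (ν : Fin N → ℝ),
      (∀ I, 0 < ν I) ∧
      (∀ I, f (b (I, 0)) = -(ν I) • b (I, 1) ∧ f (b (I, 1)) = ν I • b (I, 0)) := by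
  induction N with
  | zero =>
    intro E _ _ _ hdim f hskew hinj
    have : Subsingleton E := finrank_zero_iff.mp (by simpa using hdim)
    have hemp : IsEmpty (Fin 0 × Fin 2) := by infer_instance
    let bas : Basis (Fin 0 × Fin 2) ℝ E := Basis.empty E
    have horth : Orthonormal ℝ ⇑bas := by
      rw [orthonormal_iff_ite]
      exact fun i => isEmptyElim i
    exact ⟨bas.toOrthonormalBasis horth, finZeroElim, fun I => I.elim0, fun I => I.elim0⟩
  | succ N ih =>
    intro E _ _ _ hdim f hskew hinj
    -- the symmetric operator f ∘ f
    set T : E →ₗ[ℝ] E := f ∘ₗ f with hTdef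
    have hT : T.IsSymmetric := by
      intro u w
      have h1 : ⟪f (f u), w⟫ = -⟪f u, f w⟫ := hskew (f u) w
      have h2 : ⟪f u, f w⟫ = -⟪u, f (f w)⟫ := hskew u (f w)
      simp only [hTdef, LinearMap.comp_apply]
      rw [h1, h2]; ring
    -- an eigenvector
    obtain ⟨i0⟩ : Nonempty (Fin (2 * (N + 1))) := ⟨⟨0, by omega⟩⟩
    set μ : ℝ := hT.eigenvalues hdim i0 with hμdef
    set v : E := hT.eigenvectorBasis hdim i0 with hvdef
    have hv : Module.End.HasEigenvector T μ v := hT.hasEigenvector_eigenvectorBasis hdim i0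
    have hv1 : ⟪v, v⟫ = 1 := by
      have := (hT.eigenvectorBasis hdim).orthonormal
      rw [orthonormal_iff_ite] at this
      have h := this i0 i0
      rwa [if_pos rfl] at h
    have hvne : v ≠ 0 := hv.2
    have hfv : f (f v) = μ • v := hv.apply_eq_smul
    have hfvne : f v ≠ 0 := fun h => hvne (hinj (by simpa using h))
    -- the eigenvalue is negative
    have hfvfv : ⟪f v, f v⟫ = -μ := by
      have := hskew (f v) v
      rw [hfv, real_inner_smul_left, hv1] at this
      linarith
    have hμneg : μ < 0 := by
      have hpos : 0 < ⟪f v, f v⟫ :=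
        lt_of_le_of_ne real_inner_self_nonneg
          (fun h => hfvne (inner_self_eq_zero.mp h.symm))
      linarith
    set ν₀ : ℝ := Real.sqrt (-μ) with hν₀def
    have hν₀pos : 0 < ν₀ := Real.sqrt_pos.mpr (by linarith)
    have hν₀sq : ν₀ * ν₀ = -μ := Real.mul_self_sqrt (by linarith)
    set x : E := v with hxdef
    set y : E := ν₀⁻¹ • f v with hydef
    have hfx : f x = ν₀ • y := by
      rw [hydef, smul_smul, mul_inv_cancel₀ hν₀pos.ne', one_smul]
    have hfy : f y = -ν₀ • x := by
      rw [hydef, _root_.map_smul, hfv, smul_smul]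
      congr 1
      field_simp
      nlinarith [hν₀sq]
    have hvfv0 : ⟪v, f v⟫ = 0 := by
      have h1 := hskew v v
      have h2 := real_inner_comm (f v) v
      linarith
    have hxy : ⟪x, y⟫ = 0 := by
      rw [hydef, real_inner_smul_right, hvfv0, mul_zero]
    have hyy : ⟪y, y⟫ = 1 := by
      rw [hydef, real_inner_smul_right, real_inner_smul_left, hfvfv]
      field_simp
      nlinarith [hν₀sq]
    have hxn : ‖x‖ = 1 := by
      have h := hv1; rw [real_inner_self_eq_norm_sq] at h; nlinarith [norm_nonneg x]
    have hyn : ‖y‖ = 1 := by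
      have h := hyy; rw [real_inner_self_eq_norm_sq] at h; nlinarith [norm_nonneg y]
    -- the 2-dimensional invariant subspace and its orthogonal complement
    set K : Submodule ℝ E := Submodule.span ℝ ({x, y} : Set E) with hKdef
    have hxK : x ∈ K := Submodule.subset_span (by simp)
    have hyK : y ∈ K := Submodule.subset_span (by simp)
    have hWinv : ∀ w ∈ Kᗮ, f w ∈ Kᗮ := by
      intro w hw
      rw [Submodule.mem_orthogonal]
      intro u hu
      obtain ⟨a, b, rfl⟩ := Submodule.mem_span_pair.mp hu
      have hwx : ⟪w, x⟫ = 0 := by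
        rw [real_inner_comm]; exact (Submodule.mem_orthogonal K w).mp hw x hxK
      have hwy : ⟪w, y⟫ = 0 := by
        rw [real_inner_comm]; exact (Submodule.mem_orthogonal K w).mp hw y hyK
      have h1 : ⟪f w, x⟫ = 0 := by
        rw [hskew w x, hfx, real_inner_smul_right, hwy]
        ring
      have h2 : ⟪f w, y⟫ = 0 := by
        rw [hskew w y, hfy, real_inner_smul_right, hwx]
        ring
      rw [real_inner_comm, inner_add_right, real_inner_smul_right, real_inner_smul_right,
        h1, h2]
      ring
    -- dimension count
    have hyx : ⟪y, x⟫ = 0 := by rw [real_inner_comm]; exact hxy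
    have hortho2 : Orthonormal ℝ ![x, y] := by
      rw [orthonormal_iff_ite]
      intro i j
      fin_cases i <;> fin_cases j <;>
        simp [hv1, hxy, hyy, hyx, hxn, hyn]
    have hrange : Set.range ![x, y] = ({x, y} : Set E) := by
      simp [Matrix.range_cons, Matrix.range_empty, Set.pair_comm]
    have hKrank : finrank ℝ K = 2 := by
      rw [hKdef, ← hrange]
      simpa using finrank_span_eq_card hortho2.linearIndependent
    have hWrank : finrank ℝ Kᗮ = 2 * N := by
      have := Submodule.finrank_add_finrank_orthogonal K
      rw [hKrank, hdim] at this
      omega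
    -- restrict f to the orthogonal complement
    set f' : Kᗮ →ₗ[ℝ] Kᗮ := f.restrict hWinv with hf'def
    have hf'coe : ∀ w : Kᗮ, (f' w : E) = f w := fun w => rfl
    have hf'skew : ∀ u w : Kᗮ, ⟪f' u, w⟫ = -⟪u, f' w⟫ := by
      intro u w
      rw [Submodule.coe_inner, Submodule.coe_inner, hf'coe, hf'coe]
      exact hskew u w
    have hf'inj : Function.Injective f' := by
      intro u w h
      apply Subtype.ext
      apply hinj
      rw [← hf'coe, ← hf'coe, h]
    obtain ⟨b', ν', hν'pos, hb'⟩ := ih Kᗮ hWrank f' hf'skew hf'inj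
    -- assemble the new basis
    set c : Fin (N + 1) × Fin 2 → E :=
      fun p => Fin.cases (![y, x] p.2) (fun I => (b' (I, p.2) : E)) p.1 with hcdef
    have hc0 : ∀ s : Fin 2, c (0, s) = ![y, x] s := fun s => rfl
    have hcs : ∀ (I : Fin N) (s : Fin 2), c (I.succ, s) = (b' (I, s) : E) := fun I s => rfl
    have hb'W : ∀ (I : Fin N) (s : Fin 2), (b' (I, s) : E) ∈ Kᗮ := fun I s => (b' (I, s)).2
    have hinKW : ∀ (u : E), u ∈ K → ∀ (w : E), w ∈ Kᗮ → ⟪u, w⟫ = 0 := by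
      intro u hu w hw
      exact (Submodule.mem_orthogonal K w).mp hw u hu
    have hxyK : ∀ s : Fin 2, (![y, x] s) ∈ K := by
      intro s
      fin_cases s
      · simpa using hyK
      · simpa using hxK
    have horthb' := b'.orthonormal
    rw [orthonormal_iff_ite] at horthb'
    have hcorth : Orthonormal ℝ c := by
      rw [orthonormal_iff_ite]
      rintro ⟨i, s⟩ ⟨j, t⟩
      induction i using Fin.cases with
      | zero =>
        induction j using Fin.cases with
        | zero =>
          rw [hc0, hc0]
          have : ((0 : Fin (N+1)), s) = (0, t) ↔ s = t := by simp [Prod.ext_iff]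
          rw [if_congr this rfl rfl]
          fin_cases s <;> fin_cases t <;>
            simp [hv1, hxy, hyy, hyx, hxn, hyn]
        | succ j =>
          rw [hc0, hcs]
          rw [hinKW _ (hxyK s) _ (hb'W j t)]
          have : ((0 : Fin (N+1)), s) ≠ (j.succ, t) := by
            simp [Prod.ext_iff]
            intro h; exact absurd h.symm (Fin.succ_ne_zero j)
          simp [this]
      | succ i =>
        induction j using Fin.cases with
        | zero =>
          rw [hcs, hc0, real_inner_comm]
          rw [hinKW _ (hxyK t) _ (hb'W i s)]
          have : ((Fin.succ i), s) ≠ ((0 : Fin (N+1)), t) := by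
            simp [Prod.ext_iff]
          simp [this]
        | succ j =>
          rw [hcs, hcs, ← Submodule.coe_inner, horthb']
          have : ((Fin.succ i), s) = (j.succ, t) ↔ ((i, s) : Fin N × Fin 2) = (j, t) := by
            simp [Prod.ext_iff, Fin.succ_inj]
          rw [if_congr this.symm rfl rfl]
    have hcard : Fintype.card (Fin (N + 1) × Fin 2) = finrank ℝ E := by
      simp [hdim]; omega
    set bas : Basis (Fin (N + 1) × Fin 2) ℝ E :=
      basisOfLinearIndependentOfCardEqFinrank hcorth.linearIndependent hcard with hbasdef
    have hbasc : ⇑bas = c := by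
      rw [hbasdef, coe_basisOfLinearIndependentOfCardEqFinrank]
    set b : OrthonormalBasis (Fin (N + 1) × Fin 2) ℝ E :=
      bas.toOrthonormalBasis (hbasc ▸ hcorth) with hbdef
    have hbc : ∀ p, b p = c p := by
      intro p
      rw [hbdef, Basis.coe_toOrthonormalBasis, hbasc]
    refine ⟨b, Fin.cases ν₀ ν', ?_, ?_⟩
    · intro I
      induction I using Fin.cases with
      | zero => simpa using hν₀pos
      | succ I => simpa using hν'pos I
    · intro I
      induction I using Fin.cases with
      | zero =>
        simp only [hbc, hc0]
        constructor
        · simpa using hfy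
        · simpa using hfx
      | succ I =>
        simp only [hbc, hcs, Fin.cases_succ]
        have h1 := congrArg (Subtype.val) (hb' I).1
        have h2 := congrArg (Subtype.val) (hb' I).2
        rw [hf'coe] at h1 h2
        constructor
        · simpa using h1
        · simpa using h2

open Matrix in
theorem skew_matrix_normal (N : ℕ) (A : Matrix (Fin N × Fin 2) (Fin N × Fin 2) ℝ)
    (hAT : Aᵀ = -A) (hdet : IsUnit A.det) :
    ∃ (O : Matrix (Fin N × Fin 2) (Fin N × Fin 2) ℝ) (ν : Fin N → ℝ),
      Oᵀ * O = 1 ∧ (∀ I, 0 < ν I) ∧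
      Oᵀ * A * O = Matrix.diagonal (fun i => ν i.1) * stdOmega N ℝ := by
  classical
  set E := EuclideanSpace ℝ (Fin N × Fin 2) with hEdef
  have hdim : Module.finrank ℝ E = 2 * N := by
    show Module.finrank ℝ (EuclideanSpace ℝ (Fin N × Fin 2)) = 2 * N
    rw [finrank_euclideanSpace]
    simp [mul_comm]
  set f : E →ₗ[ℝ] E := Matrix.toEuclideanLin A with hfdef
  have hfapp : ∀ (u : E) (i), (f u) i = ∑ l, A i l * u l := fun u i => rfl
  have hA : ∀ i l, A i l = -A l i := by
    intro i l
    have := congrFun (congrFun hAT l) i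
    simp only [Matrix.transpose_apply, Matrix.neg_apply] at this
    linarith
  have hinner : ∀ u w : E, (inner ℝ u w : ℝ) = ∑ i, u i * w i := by
    intro u w
    rw [PiLp.inner_apply]
    simp [RCLike.inner_apply, mul_comm]
  have hskew : ∀ u w : E, (inner ℝ (f u) w : ℝ) = -(inner ℝ u (f w) : ℝ) := by
    intro u w
    rw [hinner, hinner]
    calc ∑ i, (f u) i * w i
        = ∑ i, ∑ l, A i l * u l * w i := by
          refine Finset.sum_congr rfl fun i _ => ?_
          rw [hfapp, Finset.sum_mul]
      _ = ∑ l, ∑ i, A i l * u l * w i := Finset.sum_comm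
      _ = ∑ l, -(u l * (f w) l) := by
          refine Finset.sum_congr rfl fun l _ => ?_
          rw [hfapp, Finset.mul_sum, ← Finset.sum_neg_distrib]
          refine Finset.sum_congr rfl fun i _ => ?_
          rw [hA i l]
          ring
      _ = -∑ l, u l * (f w) l := by rw [Finset.sum_neg_distrib]
  have hinj : Function.Injective f := by
    have : ∀ u : E, (A⁻¹ * A).mulVec (fun l => u l) = fun l => u l := by
      intro u
      rw [nonsing_inv_mul A hdet, one_mulVec]
    intro u w h
    have h2 : (fun i => (f u) i) = fun i => (f w) i := by
      funext i; rw [h]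
    simp only [hfapp] at h2
    have h3 : A⁻¹.mulVec (A.mulVec (fun l => u l)) = A⁻¹.mulVec (A.mulVec (fun l => w l)) := by
      have hu : A.mulVec (fun l => u l) = A.mulVec (fun l => w l) := by
        funext i
        simpa [Matrix.mulVec, dotProduct] using congrFun h2 i
      rw [hu]
    rw [mulVec_mulVec, mulVec_mulVec, this u, this w] at h3
    ext i
    exact congrFun h3 i
  obtain ⟨b, ν, hνpos, hb⟩ := skew_normal_form N E hdim f hskew hinj
  set O : Matrix (Fin N × Fin 2) (Fin N × Fin 2) ℝ := fun i j => (b j) i with hOdef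
  have horth := b.orthonormal
  rw [orthonormal_iff_ite] at horth
  refine ⟨O, ν, ?_, hνpos, ?_⟩
  · ext j k
    rw [Matrix.mul_apply, Matrix.one_apply]
    have := horth j k
    rw [hinner] at this
    simpa [hOdef, transpose_apply, Matrix.transpose, Matrix.of_apply] using this
  · have hentry : ∀ j k, (Oᵀ * A * O) j k = (inner ℝ (b j) (f (b k)) : ℝ) := by
      intro j k
      rw [hinner]
      simp only [Matrix.mul_apply, Matrix.transpose_apply, Finset.sum_mul]
      conv_lhs => rw [Finset.sum_comm]
      simp only [hfapp, Finset.mul_sum]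
      refine Finset.sum_congr rfl fun x _ => Finset.sum_congr rfl fun i _ => ?_
      simp only [hOdef]
      ring
    ext j k
    obtain ⟨k1, k2⟩ := k
    rw [hentry, Matrix.diagonal_mul]
    have hk2 : k2 = 0 ∨ k2 = 1 := by omega
    rcases hk2 with rfl | rfl
    · rw [(hb k1).1, real_inner_smul_right, horth]
      obtain ⟨j1, j2⟩ := j
      by_cases hj : j1 = k1
      · subst hj
        fin_cases j2 <;> simp [stdOmega, Prod.ext_iff]
      · simp [stdOmega, Prod.ext_iff, hj]
    · rw [(hb k1).2, real_inner_smul_right, horth]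
      obtain ⟨j1, j2⟩ := j
      by_cases hj : j1 = k1
      · subst hj
        fin_cases j2 <;> simp [stdOmega, Prod.ext_iff]
      · simp [stdOmega, Prod.ext_iff, hj]

open Matrix in
lemma stdOmega_transpose (N : ℕ) : (stdOmega N ℝ)ᵀ = -stdOmega N ℝ := by
  ext i j
  rw [Matrix.transpose_apply, Matrix.neg_apply]
  obtain ⟨i1, i2⟩ := i
  obtain ⟨j1, j2⟩ := j
  by_cases h : i1 = j1
  · subst h
    have hi : i2 = 0 ∨ i2 = 1 := by omega
    have hj : j2 = 0 ∨ j2 = 1 := by omega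
    rcases hi with rfl | rfl <;> rcases hj with rfl | rfl <;>
      simp [stdOmega]
  · simp only [stdOmega]
    rw [if_neg h, if_neg (fun hh : j1 = i1 => h hh.symm)]
    ring

open Matrix in
lemma stdOmega_mul_self (N : ℕ) : stdOmega N ℝ * stdOmega N ℝ = -1 := by
  ext i j
  rw [Matrix.mul_apply]
  obtain ⟨i1, i2⟩ := i
  obtain ⟨j1, j2⟩ := j
  have hi : i2 = 0 ∨ i2 = 1 := by omega
  have hj : j2 = 0 ∨ j2 = 1 := by omega
  rcases hi with rfl | rfl
  · rw [Finset.sum_eq_single ((i1, 1) : Fin N × Fin 2)]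
    · by_cases h : i1 = j1 <;> rcases hj with rfl | rfl <;>
        simp [stdOmega, Matrix.one_apply, Prod.ext_iff, h]
    · rintro ⟨b1, b2⟩ _ hne
      have hb2 : b2 = 0 ∨ b2 = 1 := by omega
      rcases hb2 with rfl | rfl <;> by_cases hb : i1 = b1 <;>
        simp_all [stdOmega, Prod.ext_iff]
    · intro h; exact absurd (Finset.mem_univ _) h
  · rw [Finset.sum_eq_single ((i1, 0) : Fin N × Fin 2)]
    · by_cases h : i1 = j1 <;> rcases hj with rfl | rfl <;>
        simp [stdOmega, Matrix.one_apply, Prod.ext_iff, h]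
    · rintro ⟨b1, b2⟩ _ hne
      have hb2 : b2 = 0 ∨ b2 = 1 := by omega
      rcases hb2 with rfl | rfl <;> by_cases hb : i1 = b1 <;>
        simp_all [stdOmega, Prod.ext_iff]
    · intro h; exact absurd (Finset.mem_univ _) h

open Matrix in
lemma diag_fst_comm (N : ℕ) (e : Fin N → ℝ) :
    Matrix.diagonal (fun i : Fin N × Fin 2 => e i.1) * stdOmega N ℝ =
      stdOmega N ℝ * Matrix.diagonal (fun i : Fin N × Fin 2 => e i.1) := by
  ext i j
  rw [Matrix.diagonal_mul, Matrix.mul_diagonal]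
  by_cases h : i.1 = j.1
  · rw [show e i.1 = e j.1 by rw [h]]
    ring
  · simp [stdOmega, h]


set_option maxHeartbeats 1000000 in
/-- (Williamson) Every real symmetric positive-definite `2N×2N` matrix `σ` can be brought to
the diagonal form `diag(ν₁,ν₁,…,ν_N,ν_N)` with `ν_I > 0` by a symplectic matrix `B`:
`B·σ·Bᵀ = diag(ν₁,ν₁,…,ν_N,ν_N)`. -/
theorem stmt3 (N : ℕ) (σ : Matrix (Fin N × Fin 2) (Fin N × Fin 2) ℝ)
    (hσsymm : σ.IsSymm) (hσpos : σ.PosDef) :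
    ∃ (B : Matrix (Fin N × Fin 2) (Fin N × Fin 2) ℝ) (ν : Fin N → ℝ),
      Bᵀ * stdOmega N ℝ * B = stdOmega N ℝ ∧ (∀ I, 0 < ν I) ∧
        B * σ * Bᵀ = Matrix.diagonal (fun i => ν i.1) := by
  classical
  have hps := hσpos.posSemidef
  obtain ⟨S, hSS, hSh⟩ : ∃ S : Matrix (Fin N × Fin 2) (Fin N × Fin 2) ℝ,
      S * S = σ ∧ S.IsHermitian := by
    open scoped MatrixOrder in
    exact ⟨CFC.sqrt σ, CFC.sqrt_mul_sqrt_self σ hps.nonneg, (CFC.sqrt_nonneg σ).posSemidef.1⟩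
  have hST : Sᵀ = S := by
    ext i j
    have := congrFun (congrFun hSh i) j
    simpa [Matrix.conjTranspose_apply] using this
  have hσdet : IsUnit σ.det := isUnit_iff_ne_zero.mpr (ne_of_gt hσpos.det_pos)
  have hSdetu : IsUnit S.det := by
    have h : S.det * S.det = σ.det := by rw [← Matrix.det_mul, hSS]
    exact isUnit_of_mul_isUnit_left (h ▸ hσdet)
  have hΩT := stdOmega_transpose N
  have hΩΩ := stdOmega_mul_self N
  have hΩdet : IsUnit (stdOmega N ℝ).det := by
    have h : (stdOmega N ℝ).det * (stdOmega N ℝ).det = 1 := by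
      rw [← Matrix.det_mul, hΩΩ]
      have : ((-1 : Matrix (Fin N × Fin 2) (Fin N × Fin 2) ℝ)) = -(1 : Matrix _ _ ℝ) := rfl
      rw [this, Matrix.det_neg, Matrix.det_one, mul_one]
      have hcard : Fintype.card (Fin N × Fin 2) = 2 * N := by simp [mul_comm]
      rw [hcard]
      exact Even.neg_one_pow ⟨N, by ring⟩
    exact IsUnit.of_mul_eq_one _ h
  set A := S * stdOmega N ℝ * S with hAdef
  have hAT : Aᵀ = -A := by
    rw [hAdef, Matrix.transpose_mul, Matrix.transpose_mul, hST, hΩT]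
    simp only [Matrix.mul_neg, Matrix.neg_mul, Matrix.mul_assoc]
  have hAdet : IsUnit A.det := by
    rw [hAdef, Matrix.det_mul, Matrix.det_mul]
    exact (hSdetu.mul hΩdet).mul hSdetu
  obtain ⟨O, ν, hOO, hνpos, hOAO⟩ := skew_matrix_normal N A hAT hAdet
  have hOOT : O * Oᵀ = 1 := mul_eq_one_comm.mp hOO
  set d := Matrix.diagonal (fun i : Fin N × Fin 2 => ν i.1) with hddef
  set D := Matrix.diagonal (fun i : Fin N × Fin 2 => Real.sqrt (ν i.1)) with hDdef
  have hDD : D * D = d := by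
    rw [hDdef, hddef, Matrix.diagonal_mul_diagonal]
    have he : (fun i : Fin N × Fin 2 => Real.sqrt (ν i.1) * Real.sqrt (ν i.1)) =
        fun i : Fin N × Fin 2 => ν i.1 := funext fun i => Real.mul_self_sqrt (hνpos i.1).le
    rw [he]
  have hDT : Dᵀ = D := Matrix.diagonal_transpose _
  have hDcomm : D * stdOmega N ℝ = stdOmega N ℝ * D := by
    rw [hDdef]
    exact diag_fst_comm N (fun I => Real.sqrt (ν I))
  have h1 : ∀ X, stdOmega N ℝ * (D * X) = D * (stdOmega N ℝ * X) := fun X => by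
    rw [← Matrix.mul_assoc, ← hDcomm, Matrix.mul_assoc]
  have h2 : ∀ X, D * (D * X) = d * X := fun X => by
    rw [← Matrix.mul_assoc, hDD]
  have h4 : ∀ X, O * (Oᵀ * X) = X := fun X => by
    rw [← Matrix.mul_assoc, hOOT, Matrix.one_mul]
  have h5 : ∀ X, Oᵀ * (O * X) = X := fun X => by
    rw [← Matrix.mul_assoc, hOO, Matrix.one_mul]
  have h6 : ∀ X, S⁻¹ * (S * X) = X := fun X => by
    rw [← Matrix.mul_assoc, Matrix.nonsing_inv_mul S hSdetu, Matrix.one_mul]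
  have h7 : ∀ X, S * (S⁻¹ * X) = X := fun X => by
    rw [← Matrix.mul_assoc, Matrix.mul_nonsing_inv S hSdetu, Matrix.one_mul]
  have hdΩ : ∀ X, d * (stdOmega N ℝ * X) = Oᵀ * (A * (O * X)) := fun X => by
    have h := congrArg (fun M => M * X) hOAO
    simp only [Matrix.mul_assoc] at h
    exact h.symm
  have hBT : (D * Oᵀ * S⁻¹)ᵀ = S⁻¹ * (O * D) := by
    rw [Matrix.transpose_mul, Matrix.transpose_mul, Matrix.transpose_nonsing_inv, hST,
      Matrix.transpose_transpose, hDT]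
  refine ⟨D * Oᵀ * S⁻¹, ν, ?_, hνpos, ?_⟩
  · rw [hBT]
    calc S⁻¹ * (O * D) * stdOmega N ℝ * (D * Oᵀ * S⁻¹)
        = S⁻¹ * (O * (D * (stdOmega N ℝ * (D * (Oᵀ * S⁻¹))))) := by
          simp only [Matrix.mul_assoc]
      _ = S⁻¹ * (O * (D * (D * (stdOmega N ℝ * (Oᵀ * S⁻¹))))) := by
          rw [h1 (Oᵀ * S⁻¹)]
      _ = S⁻¹ * (O * (d * (stdOmega N ℝ * (Oᵀ * S⁻¹)))) := by
          rw [h2 (stdOmega N ℝ * (Oᵀ * S⁻¹))]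
      _ = S⁻¹ * (O * (Oᵀ * (A * (O * (Oᵀ * S⁻¹))))) := by
          rw [hdΩ (Oᵀ * S⁻¹)]
      _ = S⁻¹ * (A * S⁻¹) := by rw [h4 S⁻¹, h4 (A * S⁻¹)]
      _ = stdOmega N ℝ := by
          rw [hAdef]
          simp only [Matrix.mul_assoc]
          rw [h6 (stdOmega N ℝ * (S * S⁻¹)), Matrix.mul_nonsing_inv S hSdetu, Matrix.mul_one]
  · rw [hBT, ← hSS]
    calc D * Oᵀ * S⁻¹ * (S * S) * (S⁻¹ * (O * D))
        = D * (Oᵀ * (S⁻¹ * (S * (S * (S⁻¹ * (O * D)))))) := by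
          simp only [Matrix.mul_assoc]
      _ = D * (Oᵀ * (S * (S⁻¹ * (O * D)))) := by
          rw [h6 (S * (S⁻¹ * (O * D)))]
      _ = D * (Oᵀ * (O * D)) := by rw [h7 (O * D)]
      _ = D * D := by rw [h5 D]
      _ = Matrix.diagonal (fun i => ν i.1) := hDD
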